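/- arXiv:1803.01665 — 2 statements merged into one kernel-verified Lean document; each statement's English description precedes it below -/
import Mathlib

section
/- Suppose p_* > 0. Then for every w ∈ T and every γ ∈ (0,1), w − ς·Φ^{−1}(1 − p_*(1−γ)) ≤ Q_γ(w) ≤ w − ς·Φ^{−1}(p_* γ). -/
open Filter MeasureTheory ProbabilityTheory Set

/-- The cdf of the normal distribution with mean `θ` and variance `ς²`, truncated to the
set `T`: `F^T_{θ,ς²}(w) = P(V ≤ w ∧ V ∈ T) / P(V ∈ T)` for `V ~ N(θ, ς²)`. -/
noncomputable def truncNormalCDF (ς : ℝ) (T : Set ℝ) (θ w : ℝ) : ℝ :=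
  ((gaussianReal θ (Real.toNNReal (ς ^ 2))) (Set.Iic w ∩ T)).toReal /
    ((gaussianReal θ (Real.toNNReal (ς ^ 2))) T).toReal

/-- The standard normal cumulative distribution function. -/
noncomputable def stdNormalCDF (x : ℝ) : ℝ :=
  ∫ t in Set.Iic x, (Real.sqrt (2 * Real.pi))⁻¹ * Real.exp (-(t ^ 2) / 2)

/-- The inverse `Φ^{−1}` of the standard normal cdf on `(0,1)`. -/
noncomputable def stdNormalCDFInv (p : ℝ) : ℝ :=
  Function.invFun stdNormalCDF p

lemma stdPdf_eq :
    gaussianPDFReal 0 1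
      = fun t => (Real.sqrt (2 * Real.pi))⁻¹ * Real.exp (-(t ^ 2) / 2) := by
  funext t
  simp [gaussianPDFReal]

lemma stdPdf_integrable :
    Integrable (fun t => (Real.sqrt (2 * Real.pi))⁻¹ * Real.exp (-(t ^ 2) / 2)) := by
  rw [← stdPdf_eq]; exact integrable_gaussianPDFReal 0 1

lemma stdNormalCDF_eq_toReal (y : ℝ) :
    ((gaussianReal 0 1) (Set.Iic y)).toReal = stdNormalCDF y := by
  rw [gaussianReal_apply_eq_integral 0 one_ne_zero, ENNReal.toReal_ofReal
    (MeasureTheory.integral_nonneg fun x => gaussianPDFReal_nonneg _ _ _)]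
  rw [stdNormalCDF, stdPdf_eq]

lemma stdNormalCDF_eq_cdf : stdNormalCDF = cdf (gaussianReal 0 1) := by
  funext y
  rw [cdf_eq_real, measureReal_def, stdNormalCDF_eq_toReal]

lemma stdNormalCDF_sub (x y : ℝ) :
    stdNormalCDF y - stdNormalCDF x
      = ∫ t in x..y, (Real.sqrt (2 * Real.pi))⁻¹ * Real.exp (-(t ^ 2) / 2) :=
  intervalIntegral.integral_Iic_sub_Iic stdPdf_integrable.integrableOn
    stdPdf_integrable.integrableOn

lemma stdNormalCDF_strictMono : StrictMono stdNormalCDF := by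
  intro x y hxy
  have h := stdNormalCDF_sub x y
  have hpos : 0 < ∫ t in x..y, (Real.sqrt (2 * Real.pi))⁻¹ * Real.exp (-(t ^ 2) / 2) :=
    intervalIntegral.intervalIntegral_pos_of_pos stdPdf_integrable.intervalIntegrable
      (fun t => by positivity) hxy
  linarith

lemma stdNormalCDF_continuous : Continuous stdNormalCDF := by
  have : stdNormalCDF = fun y =>
      (∫ t in (0:ℝ)..y, (Real.sqrt (2 * Real.pi))⁻¹ * Real.exp (-(t ^ 2) / 2))
        + stdNormalCDF 0 := by
    funext y
    have := stdNormalCDF_sub 0 y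
    linarith
  rw [this]
  exact (intervalIntegral.continuous_primitive
    (fun a b => stdPdf_integrable.intervalIntegrable) 0).add continuous_const

lemma stdNormalCDF_surjOn {p : ℝ} (hp : p ∈ Set.Ioo (0:ℝ) 1) :
    ∃ x, stdNormalCDF x = p := by
  have h0 : Tendsto stdNormalCDF atBot (nhds 0) := by
    rw [stdNormalCDF_eq_cdf]; exact tendsto_cdf_atBot _
  have h1 : Tendsto stdNormalCDF atTop (nhds 1) := by
    rw [stdNormalCDF_eq_cdf]; exact tendsto_cdf_atTop _
  obtain ⟨x₀, hx₀⟩ := (h0.eventually_lt_const hp.1).exists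
  obtain ⟨x₁, hx₁⟩ := (h1.eventually_const_lt hp.2).exists
  have hx01 : x₀ ≤ x₁ := by
    by_contra h
    exact absurd (stdNormalCDF_strictMono.le_iff_le.mpr (le_of_not_ge h))
      (by linarith)
  obtain ⟨x, _, hx⟩ := intermediate_value_Icc hx01 stdNormalCDF_continuous.continuousOn
    ⟨hx₀.le, hx₁.le⟩
  exact ⟨x, hx⟩

lemma stdNormalCDF_invFun {p : ℝ} (hp : p ∈ Set.Ioo (0:ℝ) 1) :
    stdNormalCDF (stdNormalCDFInv p) = p :=
  Function.invFun_eq (stdNormalCDF_surjOn hp)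

lemma stdNormalCDFInv_le {p z : ℝ} (hp : p ∈ Set.Ioo (0:ℝ) 1)
    (h : p ≤ stdNormalCDF z) : stdNormalCDFInv p ≤ z := by
  have := stdNormalCDF_invFun hp
  exact stdNormalCDF_strictMono.le_iff_le.mp (by linarith)

lemma le_stdNormalCDFInv {p z : ℝ} (hp : p ∈ Set.Ioo (0:ℝ) 1)
    (h : stdNormalCDF z ≤ p) : z ≤ stdNormalCDFInv p := by
  have := stdNormalCDF_invFun hp
  exact stdNormalCDF_strictMono.le_iff_le.mp (by linarith)

lemma gaussian_Iic_eq {ς : ℝ} (hς : 0 < ς) (θ y : ℝ) :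
    gaussianReal θ (Real.toNNReal (ς ^ 2)) (Set.Iic y)
      = gaussianReal 0 1 (Set.Iic ((y - θ) / ς)) := by
  have hmap : (gaussianReal (0:ℝ) 1).map (fun x => ς * x + θ)
      = gaussianReal θ (Real.toNNReal (ς ^ 2)) := by
    have h1 := Measure.map_map (μ := gaussianReal (0:ℝ) 1)
      (measurable_add_const θ) (measurable_const_mul ς)
    have h2 : ((· + θ) ∘ (ς * ·)) = fun x => ς * x + θ := rfl
    rw [h2] at h1
    rw [← h1, gaussianReal_map_const_mul, gaussianReal_map_add_const]
    congr 1
    · ring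
    · ext
      simp [Real.coe_toNNReal _ (sq_nonneg ς)]
  rw [← hmap, Measure.map_apply (by fun_prop) measurableSet_Iic]
  congr 1
  ext x
  simp only [Set.mem_preimage, Set.mem_Iic]
  rw [le_div_iff₀ hς, mul_comm]
  constructor <;> intro h <;> linarith

/-- Suppose `p_* = inf_{ϑ} P(N(ϑ,ς²) ∈ T) > 0`.  Then for every `w ∈ T` and `γ ∈ (0,1)`,
`w − ς·Φ^{−1}(1 − p_*(1−γ)) ≤ Q_γ(w) ≤ w − ς·Φ^{−1}(p_* γ)`. -/
theorem stmt_11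
    (ς : ℝ) (hς : 0 < ς) (K : ℕ) (hK : 1 ≤ K) (a b : ℕ → EReal)
    (hab : ∀ i < K, a i < b i) (hba : ∀ i, i + 1 < K → b i < a (i + 1))
    (T : Set ℝ)
    (hT : T = ⋃ i ∈ Finset.range K, {x : ℝ | a i < (x : EReal) ∧ (x : EReal) < b i})
    (pstar : ℝ)
    (hp : pstar = ⨅ ϑ : ℝ, ((gaussianReal ϑ (Real.toNNReal (ς ^ 2))) T).toReal)
    (hppos : 0 < pstar)
    (w : ℝ) (hw : w ∈ T) (γ : ℝ) (hγ : γ ∈ Set.Ioo (0 : ℝ) 1)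
    (Q : ℝ → ℝ) (hQ : ∀ γ' ∈ Set.Ioo (0 : ℝ) 1, truncNormalCDF ς T (Q γ') w = γ') :
    w - ς * stdNormalCDFInv (1 - pstar * (1 - γ)) ≤ Q γ ∧
      Q γ ≤ w - ς * stdNormalCDFInv (pstar * γ) := by
  set θ := Q γ with hθ
  set μ := gaussianReal θ (Real.toNNReal (ς ^ 2)) with hμ
  have hprob : IsProbabilityMeasure μ := by infer_instance
  set A := (μ (Set.Iic w ∩ T)).toReal with hA
  set B := (μ T).toReal with hB
  -- pstar ≤ B
  have hbdd : BddBelow (Set.range fun ϑ : ℝ =>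
      ((gaussianReal ϑ (Real.toNNReal (ς ^ 2))) T).toReal) := by
    refine ⟨0, ?_⟩
    rintro x ⟨ϑ, rfl⟩
    exact ENNReal.toReal_nonneg
  have hpB : pstar ≤ B := by
    rw [hp]
    exact ciInf_le hbdd θ
  have hB1 : B ≤ 1 := by
    have h1 : μ T ≤ 1 := by
      calc μ T ≤ μ Set.univ := measure_mono (Set.subset_univ T)
        _ = 1 := measure_univ
    rw [hB]
    calc (μ T).toReal ≤ (1 : ENNReal).toReal := ENNReal.toReal_mono ENNReal.one_ne_top h1
      _ = 1 := by simp
  have hABγ : A = γ * B := by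
    have h := hQ γ hγ
    rw [truncNormalCDF] at h
    rw [← hμ] at h
    rw [← hA, ← hB] at h
    have hBpos : 0 < B := lt_of_lt_of_le hppos hpB
    field_simp at h
    linarith [h]
  -- the standardized cdf value
  set z := (w - θ) / ς with hz
  have hΦ : (μ (Set.Iic w)).toReal = stdNormalCDF z := by
    rw [hμ, gaussian_Iic_eq hς, stdNormalCDF_eq_toReal]
  -- upper bound on A
  have hAle : A ≤ stdNormalCDF z := by
    rw [← hΦ, hA]
    exact ENNReal.toReal_mono (measure_ne_top _ _)
      (measure_mono Set.inter_subset_left)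
  -- lower bound: B ≤ A + (1 - Φ z)
  have hIoi : (μ (Set.Ioi w)).toReal = 1 - stdNormalCDF z := by
    have h := measure_add_measure_compl (μ := μ) (measurableSet_Iic (a := w))
    rw [Set.compl_Iic] at h
    have h1 : (μ (Set.Iic w)).toReal + (μ (Set.Ioi w)).toReal = 1 := by
      rw [← ENNReal.toReal_add (measure_ne_top _ _) (measure_ne_top _ _), h,
        measure_univ, ENNReal.toReal_one]
    linarith [hΦ ▸ h1]
  have hBle : B ≤ A + (1 - stdNormalCDF z) := by
    have hsub : T ⊆ (Set.Iic w ∩ T) ∪ Set.Ioi w := by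
      intro x hx
      rcases le_or_gt x w with h | h
      · exact Or.inl ⟨h, hx⟩
      · exact Or.inr h
    have : μ T ≤ μ (Set.Iic w ∩ T) + μ (Set.Ioi w) :=
      (measure_mono (μ := μ) hsub).trans (measure_union_le _ _)
    rw [← hIoi, hA, hB]
    rw [← ENNReal.toReal_add (measure_ne_top _ _) (measure_ne_top _ _)]
    exact ENNReal.toReal_mono
      (by finiteness) this
  have hγ1 : 0 < 1 - γ := by linarith [hγ.2]
  -- membership facts
  have hmem1 : pstar * γ ∈ Set.Ioo (0:ℝ) 1 := by
    constructor
    · exact mul_pos hppos hγ.1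
    · nlinarith [hγ.1, hγ.2, hpB, hB1]
  have hmem2 : 1 - pstar * (1 - γ) ∈ Set.Ioo (0:ℝ) 1 := by
    constructor
    · have h1 : pstar * (1 - γ) ≤ 1 * (1 - γ) :=
        mul_le_mul_of_nonneg_right (hpB.trans hB1) hγ1.le
      linarith [hγ.1]
    · nlinarith
  constructor
  · -- lower bound on θ
    have hΦle : stdNormalCDF z ≤ 1 - pstar * (1 - γ) := by
      nlinarith [hBle, hABγ, hpB, hγ1]
    have := le_stdNormalCDFInv hmem2 hΦle
    rw [hz, div_le_iff₀ hς] at this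
    linarith [this]
  · -- upper bound on θ
    have hΦge : pstar * γ ≤ stdNormalCDF z := by
      nlinarith [hAle, hABγ, hpB, hγ.1]
    have := stdNormalCDFInv_le hmem1 hΦge
    rw [hz, le_div_iff₀ hς] at this
    linarith [this]
end

section
/- Either V⁻(z) > −∞ holds for all z ∈ ℝⁿ orthogonal to η, or V⁺(z) < ∞ holds for all z ∈ ℝⁿ orthogonal to η (or both). -/
open Matrix

/-- The polyhedral-method statement for the Lasso selection event: with
`A = A_{m,s}`, `b = b_{m,s}` the polyhedral description of the event
`{m̂ = m, ŝ = s}`, `η = X_m (X_m' X_m)⁻¹ γ` (for `γ ≠ 0`), `c = η/‖η‖²`, and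
`V⁻(z) = max({(b − A z)_i/(A c)_i : (A c)_i < 0} ∪ {−∞})`,
`V⁺(z) = min({(b − A z)_i/(A c)_i : (A c)_i > 0} ∪ {∞})`:
either `V⁻(z) > −∞` for all `z` orthogonal to `η`, or `V⁺(z) < ∞` for all `z`
orthogonal to `η` (or both). -/
theorem stmt_15 (n p k : ℕ) (X : Matrix (Fin n) (Fin p) ℝ) (lam : ℝ) (hlam : 0 < lam)
    (m : Finset (Fin p)) (hm : m.Nonempty) (hcard : m.card = k)
    (hcc : mᶜ.card = p - k)
    (Xm : Matrix (Fin n) (Fin k) ℝ)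
    (hXm : Xm = fun i j => X i (m.orderIsoOfFin hcard j))
    (hrank : Xm.rank = k)
    (Xmc : Matrix (Fin n) (Fin (p - k)) ℝ)
    (hXmc : Xmc = fun i j => X i ((mᶜ).orderIsoOfFin hcc j))
    (s : Fin k → ℝ) (hs : ∀ i, s i = 1 ∨ s i = -1)
    (γ : Fin k → ℝ) (hγ : γ ≠ 0)
    (η c : Fin n → ℝ)
    (hη : η = (Xm * (Xmᵀ * Xm)⁻¹) *ᵥ γ)
    (hc : c = (∑ i, η i ^ 2)⁻¹ • η)
    (A : Matrix ((Fin (p - k) ⊕ Fin (p - k)) ⊕ Fin k) (Fin n) ℝ)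
    (hA : A = Matrix.fromRows
      (Matrix.fromRows
        ((1 / lam) • (Xmcᵀ * (1 - Xm * (Xmᵀ * Xm)⁻¹ * Xmᵀ)))
        (-((1 / lam) • (Xmcᵀ * (1 - Xm * (Xmᵀ * Xm)⁻¹ * Xmᵀ)))))
      (-(Matrix.diagonal s * (Xmᵀ * Xm)⁻¹ * Xmᵀ)))
    (bv : (Fin (p - k) ⊕ Fin (p - k)) ⊕ Fin k → ℝ)
    (hbv : bv = Sum.elim
      (Sum.elim
        (fun i => 1 - ((Xmcᵀ * Xm * (Xmᵀ * Xm)⁻¹) *ᵥ s) i)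
        (fun i => 1 + ((Xmcᵀ * Xm * (Xmᵀ * Xm)⁻¹) *ᵥ s) i))
      (fun i => -lam * ((Matrix.diagonal s * (Xmᵀ * Xm)⁻¹) *ᵥ s) i))
    (Vminus Vplus : (Fin n → ℝ) → EReal)
    (hVminus : ∀ z, Vminus z =
      ⨆ i ∈ {i | (A *ᵥ c) i < 0}, (((bv i - (A *ᵥ z) i) / (A *ᵥ c) i : ℝ) : EReal))
    (hVplus : ∀ z, Vplus z =
      ⨅ i ∈ {i | 0 < (A *ᵥ c) i}, (((bv i - (A *ᵥ z) i) / (A *ᵥ c) i : ℝ) : EReal)) :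
    (∀ z : Fin n → ℝ, z ⬝ᵥ η = 0 → ⊥ < Vminus z) ∨
      (∀ z : Fin n → ℝ, z ⬝ᵥ η = 0 → Vplus z < ⊤) := by

  classical
  -- `G = Xmᵀ * Xm` is invertible
  set G : Matrix (Fin k) (Fin k) ℝ := Xmᵀ * Xm with hGdef
  have hGrank : G.rank = k := by
    rw [hGdef, Matrix.rank_transpose_mul_self, hrank]
  have hGunit : IsUnit G := by
    rw [← Matrix.mulVec_surjective_iff_isUnit]
    have hrange : LinearMap.range G.mulVecLin = ⊤ := by
      apply Submodule.eq_top_of_finrank_eq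
      have : Module.finrank ℝ (Fin k → ℝ) = k := by simp
      rw [this]
      exact hGrank
    intro y
    obtain ⟨x, hx⟩ := LinearMap.range_eq_top.mp hrange y
    exact ⟨x, hx⟩
  have hGdet : IsUnit G.det := (Matrix.isUnit_iff_isUnit_det G).mp hGunit
  have hGinv : G * G⁻¹ = 1 := Matrix.mul_nonsing_inv G hGdet
  set w : Fin k → ℝ := G⁻¹ *ᵥ γ with hwdef
  have hGw : G *ᵥ w = γ := by
    rw [hwdef, Matrix.mulVec_mulVec, hGinv, Matrix.one_mulVec]
  have hw : w ≠ 0 := by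
    intro h
    apply hγ
    rw [← hGw, h, Matrix.mulVec_zero]
  have hηw : η = Xm *ᵥ w := by
    rw [hη, hwdef, ← Matrix.mulVec_mulVec]
  have hXtη : Xmᵀ *ᵥ η = γ := by
    rw [hηw, Matrix.mulVec_mulVec, ← hGdef, hGw]
  have hη0 : η ≠ 0 := by
    intro h
    apply hγ
    rw [← hXtη, h, Matrix.mulVec_zero]
  have hsum : 0 < ∑ i, η i ^ 2 := by
    obtain ⟨i, hi⟩ := Function.ne_iff.mp hη0
    refine Finset.sum_pos' (fun j _ => sq_nonneg _) ⟨i, Finset.mem_univ i, ?_⟩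
    have : η i ≠ 0 := hi
    positivity
  set t : ℝ := (∑ i, η i ^ 2)⁻¹ with htdef
  have ht : 0 < t := inv_pos.mpr hsum
  have hXtc : Xmᵀ *ᵥ c = t • γ := by
    rw [hc, Matrix.mulVec_smul, hXtη]
  -- the bottom block of `A *ᵥ c`
  have key : ∀ j : Fin k, (A *ᵥ c) (Sum.inr j) = -(t * (s j * w j)) := by
    intro j
    rw [hA, Matrix.fromRows_mulVec]
    have : (-(Matrix.diagonal s * G⁻¹ * Xmᵀ) *ᵥ c) j = -(t * (s j * w j)) := by
      rw [Matrix.neg_mulVec, ← Matrix.mulVec_mulVec, hXtc,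
        Matrix.mulVec_smul, ← Matrix.mulVec_mulVec, ← hwdef]
      simp [Matrix.mulVec_diagonal]
    simpa using this
  obtain ⟨j, hj⟩ := Function.ne_iff.mp hw
  have hsj : s j ≠ 0 := by rcases hs j with h | h <;> rw [h] <;> norm_num
  have hval : (A *ᵥ c) (Sum.inr j) ≠ 0 := by
    rw [key j]
    exact neg_ne_zero.mpr (mul_ne_zero (ne_of_gt ht) (mul_ne_zero hsj hj))
  rcases lt_or_gt_of_ne hval with hneg | hpos
  · left
    intro z _
    rw [hVminus z]
    refine lt_of_lt_of_le (EReal.bot_lt_coe ((bv (Sum.inr j) - (A *ᵥ z) (Sum.inr j)) / (A *ᵥ c) (Sum.inr j))) ?_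
    exact le_biSup (fun i => (((bv i - (A *ᵥ z) i) / (A *ᵥ c) i : ℝ) : EReal)) hneg
  · right
    intro z _
    rw [hVplus z]
    refine lt_of_le_of_lt ?_ (EReal.coe_lt_top ((bv (Sum.inr j) - (A *ᵥ z) (Sum.inr j)) / (A *ᵥ c) (Sum.inr j)))
    exact biInf_le (fun i => (((bv i - (A *ᵥ z) i) / (A *ᵥ c) i : ℝ) : EReal)) hpos
end
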